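/- A tree-shift T is a sofic tree-shift if and only if there exist a Markov tree-shift T' and a symbol map g : A(T') → A(T) such that the induced node-wise map g_* maps T' onto T. -/

import Mathlib

namespace TreeShiftPaper

/-- Words over the alphabet `Σ = {0, …, k-1}`: nodes of the `k`-tree. -/
abbrev Word (k : ℕ) := List (Fin k)

variable {k : ℕ} {A : Type*}

/-- A set of words is prefix-closed if it contains every prefix of each of its elements. -/
def PrefixClosed (S : Set (Word k)) : Prop :=
  ∀ w ∈ S, ∀ v : Word k, v <+: w → v ∈ S

/-- The pattern with support `S` and labels `u` appears in the labeled tree `t`. -/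
def PatternAppears (t : Word k → A) (S : Set (Word k)) (u : Word k → A) : Prop :=
  ∃ s : Word k, ∀ w ∈ S, t (s ++ w) = u w

/-- The set of labeled trees avoiding every pattern of the forbidden family `F`. -/
def treeShiftOf (F : Set ((Set (Word k)) × (Word k → A))) : Set (Word k → A) :=
  {t | ∀ p ∈ F, ¬ PatternAppears t p.1 p.2}

/-- `T` is a tree-shift: it is defined by some forbidden set of patterns
(each with finite prefix-closed support). -/
def IsTreeShift (T : Set (Word k → A)) : Prop :=
  ∃ F : Set ((Set (Word k)) × (Word k → A)),
    (∀ p ∈ F, p.1.Finite ∧ PrefixClosed p.1) ∧ T = treeShiftOf F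

/-- `T` is a tree-shift of finite type: the forbidden set can be chosen finite. -/
def IsTreeSFT (T : Set (Word k → A)) : Prop :=
  ∃ F : Set ((Set (Word k)) × (Word k → A)),
    F.Finite ∧ (∀ p ∈ F, p.1.Finite ∧ PrefixClosed p.1) ∧ T = treeShiftOf F

/-- The finite word `w` occurs in the one-sided sequence `x` at position `i`. -/
def OccursAt (x : ℕ → A) (i : ℕ) (w : List A) : Prop :=
  ∀ j : Fin w.length, x (i + (j : ℕ)) = w.get j

/-- The one-sided shift space defined by the forbidden set of words `F`. -/
def shiftOf (F : Set (List A)) : Set (ℕ → A) :=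
  {x | ∀ w ∈ F, ∀ i : ℕ, ¬ OccursAt x i w}

/-- `X` is a one-sided shift space. -/
def IsShift (X : Set (ℕ → A)) : Prop := ∃ F : Set (List A), X = shiftOf F

/-- `X` is a one-sided shift of finite type. -/
def IsSFT (X : Set (ℕ → A)) : Prop :=
  ∃ F : Set (List A), F.Finite ∧ X = shiftOf F

/-- A chain: an infinite path in the tree starting at the root. -/
def IsChain (c : ℕ → Word k) : Prop :=
  c 0 = [] ∧ ∀ n : ℕ, ∃ i : Fin k, c (n + 1) = c n ++ [i]

/-- The hom tree-shift associated with a one-sided shift space `X`: labeled trees whose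
projection along every chain lies in `X`. -/
def homTree (k : ℕ) (X : Set (ℕ → A)) : Set (Word k → A) :=
  {t | ∀ c : ℕ → Word k, IsChain c → (fun n => t (c n)) ∈ X}

/-- `Y` is a sofic one-sided shift: image of an SFT under a sliding block code induced
by an `n`-block map. -/
def IsSofic (Y : Set (ℕ → A)) : Prop :=
  ∃ (B : Type) (_ : Fintype B) (X : Set (ℕ → B)) (n : ℕ) (f : (ℕ → B) → A),
    IsSFT X ∧ (∀ u v : ℕ → B, (∀ j < n, u j = v j) → f u = f v) ∧
    (fun x : ℕ → B => fun i => f (fun j => x (i + j))) '' X = Y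

/-- `T` is a sofic tree-shift: image of a tree-SFT under the map induced by an
`n`-block map. -/
def IsSoficTree (T : Set (Word k → A)) : Prop :=
  ∃ (B : Type) (_ : Fintype B) (T' : Set (Word k → B)) (n : ℕ) (g : (Word k → B) → A),
    IsTreeSFT T' ∧
    (∀ u v : Word k → B, (∀ w : Word k, w.length ≤ n → u w = v w) → g u = g v) ∧
    (fun t : Word k → B => fun w => g (fun z => t (w ++ z))) '' T' = T

/-- The Markov tree-shift determined by `k` binary `d × d` transition matrices. -/
def markovTree (k d : ℕ) (M : Fin k → Matrix (Fin d) (Fin d) Bool) :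
    Set (Word k → Fin d) :=
  {t | ∀ w : Word k, ∀ i : Fin k, M i (t w) (t (w ++ [i])) = true}

/-- The one-sided Markov (vertex) shift determined by a binary `d × d` matrix. -/
def markovShift (d : ℕ) (M : Matrix (Fin d) (Fin d) Bool) : Set (ℕ → Fin d) :=
  {x | ∀ i : ℕ, M (x i) (x (i + 1)) = true}

/-- The pattern with support `S` and labels `u` is admissible in `T`. -/
def AdmissiblePattern (T : Set (Word k → A)) (S : Set (Word k)) (u : Word k → A) : Prop :=
  ∃ t ∈ T, ∃ s : Word k, ∀ w ∈ S, t (s ++ w) = u w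

/-- The `n`-block `u` (a labeling of `Δ_n`) is admissible in `T`. -/
def AdmissibleBlock (T : Set (Word k → A)) (n : ℕ) (u : Word k → A) : Prop :=
  ∃ t ∈ T, ∃ s : Word k, ∀ w : Word k, w.length ≤ n → t (s ++ w) = u w

/-- Word distance on the `k`-tree:
`d(x,y) = |x| + |y| - 2 · max{|w| : w` a common prefix of `x` and `y}`. -/
noncomputable def wordDist (x y : Word k) : ℕ :=
  x.length + y.length - 2 * sSup {m : ℕ | ∃ w : Word k, w <+: x ∧ w <+: y ∧ w.length = m}

/-- The boundary `∂S = {w ∈ S : wΣ ∩ S = ∅}` of a support `S`. -/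
def boundary (S : Set (Word k)) : Set (Word k) :=
  {w | w ∈ S ∧ ∀ i : Fin k, w ++ [i] ∉ S}

/-- A complete prefix code: a finite prefix set such that every word of length at least
`max_{z ∈ P} |z|` has a prefix in `P`. -/
def IsCPC (P : Set (Word k)) : Prop :=
  P.Finite ∧ (∀ x ∈ P, ∀ y ∈ P, x <+: y → x = y) ∧
  ∀ w : Word k, (∀ z ∈ P, z.length ≤ w.length) → ∃ x ∈ P, x <+: w

/-- Strong irreducibility with gap `N`. -/
def SIGap (T : Set (Word k → A)) (N : ℕ) : Prop :=
  ∀ (Su Sv : Set (Word k)) (u v : Word k → A),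
    Su.Finite → PrefixClosed Su → Sv.Finite → PrefixClosed Sv →
    AdmissiblePattern T Su u → AdmissiblePattern T Sv v →
    ∀ w : Word k, (∀ h ∈ Su, N ≤ wordDist w h) →
      ∃ t ∈ T, (∀ z ∈ Su, t z = u z) ∧ ∀ z ∈ Sv, t (w ++ z) = v z

/-- `T` is strongly irreducible (SI). -/
def SI (T : Set (Word k → A)) : Prop := ∃ N : ℕ, SIGap T N

/-- `T` is block gluing (BG). -/
def BG (T : Set (Word k → A)) : Prop :=
  ∃ N : ℕ, ∀ (n m : ℕ) (u v : Word k → A),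
    AdmissibleBlock T n u → AdmissibleBlock T m v →
    ∀ w : Word k, N + n ≤ w.length →
      ∃ t ∈ T, (∀ z : Word k, z.length ≤ n → t z = u z) ∧
        ∀ z : Word k, z.length ≤ m → t (w ++ z) = v z

/-- `T` is topologically mixing (TM). -/
def TM (T : Set (Word k → A)) : Prop :=
  ∀ H₁ H₂ : Set (Word k), H₁.Finite → H₂.Finite →
    ∃ N : ℕ, ∀ t₁ ∈ T, ∀ t₂ ∈ T, ∀ w : Word k, (∀ h ∈ H₁, N ≤ wordDist w h) →
      ∃ t ∈ T, (∀ z ∈ H₁, t z = t₁ z) ∧ ∀ z ∈ H₂, t (w ++ z) = t₂ z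

/-- `T` is irreducible (IR). -/
def IR (T : Set (Word k → A)) : Prop :=
  ∀ (n m : ℕ) (u v : Word k → A),
    AdmissibleBlock T n u → AdmissibleBlock T m v →
    ∃ w : Word k, n < w.length ∧
      ∃ t ∈ T, (∀ z : Word k, z.length ≤ n → t z = u z) ∧
        ∀ z : Word k, z.length ≤ m → t (w ++ z) = v z

/-- `T` is CPC-strongly irreducible via the prefix set `P`. -/
def CPCSIWith (T : Set (Word k → A)) (P : Set (Word k)) : Prop :=
  ∀ (Su Sv : Set (Word k)) (u v : Word k → A),
    Su.Finite → PrefixClosed Su → Sv.Finite → PrefixClosed Sv →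
    AdmissiblePattern T Su u → AdmissiblePattern T Sv v →
    ∃ t ∈ T, (∀ z ∈ Su, t z = u z) ∧
      ∀ w ∈ boundary Su, ∀ z ∈ P, ∀ y ∈ Sv, t (w ++ z ++ y) = v y

/-- `T` is CPC-strongly irreducible (CPC SI). -/
def CPCSI (T : Set (Word k → A)) : Prop := ∃ P : Set (Word k), IsCPC P ∧ CPCSIWith T P

/-- `T` is uniform CPC-strongly irreducible (CPC USI): CPC SI with `P = Σ^N`. -/
def CPCUSI (T : Set (Word k → A)) : Prop :=
  ∃ N : ℕ, CPCSIWith T {z : Word k | z.length = N}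

/-- `T` is CPC-block gluing via the prefix set `P`. -/
def CPCBGWith (T : Set (Word k → A)) (P : Set (Word k)) : Prop :=
  ∀ (n m : ℕ) (u v : Word k → A),
    AdmissibleBlock T n u → AdmissibleBlock T m v →
    ∃ t ∈ T, (∀ z : Word k, z.length ≤ n → t z = u z) ∧
      ∀ w : Word k, w.length = n → ∀ z ∈ P, ∀ y : Word k, y.length ≤ m →
        t (w ++ z ++ y) = v y

/-- `T` is CPC-block gluing (CPC BG). -/
def CPCBG (T : Set (Word k → A)) : Prop := ∃ P : Set (Word k), IsCPC P ∧ CPCBGWith T P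

/-- `T` is uniform CPC-block gluing (CPC UBG): CPC BG with `P = Σ^N`. -/
def CPCUBG (T : Set (Word k → A)) : Prop :=
  ∃ N : ℕ, CPCBGWith T {z : Word k | z.length = N}

/-- `T` is CPC-irreducible (CPC IR). -/
def CPCIR (T : Set (Word k → A)) : Prop :=
  ∀ (n m : ℕ) (u v : Word k → A),
    AdmissibleBlock T n u → AdmissibleBlock T m v →
    ∃ P : Set (Word k), IsCPC P ∧ (∀ z ∈ P, n + 1 ≤ z.length) ∧
      ∃ t ∈ T, (∀ z : Word k, z.length ≤ n → t z = u z) ∧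
        ∀ w ∈ P, ∀ y : Word k, y.length ≤ m → t (w ++ y) = v y

/-- The finite word `u` is admissible in the one-sided shift space `X`. -/
def WordAdmissible (X : Set (ℕ → A)) (u : List A) : Prop :=
  ∃ x ∈ X, ∃ i : ℕ, OccursAt x i u

/-- The one-sided shift space `X` is topologically mixing. -/
def MixingShift (X : Set (ℕ → A)) : Prop :=
  ∀ u v : List A, WordAdmissible X u → WordAdmissible X v →
    ∃ N : ℕ, ∀ n ≥ N, ∃ x ∈ X, OccursAt x 0 u ∧ OccursAt x (u.length + n) v

/-- The one-sided shift space `X` is transitive (irreducible). -/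
def TransitiveShift (X : Set (ℕ → A)) : Prop :=
  ∀ u v : List A, WordAdmissible X u → WordAdmissible X v →
    ∃ x ∈ X, ∃ n : ℕ, u.length ≤ n ∧ OccursAt x 0 u ∧ OccursAt x n v

end TreeShiftPaper

namespace TreeShiftPaper

section Aux

variable {k : ℕ} {B : Type}

/-- Extend a block on `Δ_N` to a full labeling. -/
noncomputable def extBlk (N : ℕ) (u : {w : Word k // w.length ≤ N} → B) : Word k → B :=
  fun w => if h : w.length ≤ N then u ⟨w, h⟩ else u ⟨[], Nat.zero_le N⟩

/-- Admissibility of a block: no forbidden pattern matches at the root. -/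
def AdmBlk (N : ℕ) (F : Set ((Set (Word k)) × (Word k → B)))
    (u : {w : Word k // w.length ≤ N} → B) : Prop :=
  ∀ p ∈ F, ¬ ∀ w ∈ p.1, extBlk N u w = p.2 w

/-- Overlap-consistency relation between the block at a node and at its `i`-th child. -/
def blkRel (N : ℕ) (F : Set ((Set (Word k)) × (Word k → B))) (i : Fin k)
    (u v : {w : Word k // w.length ≤ N} → B) : Prop :=
  AdmBlk N F u ∧ AdmBlk N F v ∧
    ∀ (z : Word k) (h : (i :: z).length ≤ N),
      v ⟨z, le_trans (by simp) h⟩ = u ⟨i :: z, h⟩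

/-- The set of consistently-labeled block trees. -/
def blkTree (N : ℕ) (F : Set ((Set (Word k)) × (Word k → B))) :
    Set (Word k → ({w : Word k // w.length ≤ N} → B)) :=
  {s | ∀ (w : Word k) (i : Fin k), blkRel N F i (s w) (s (w ++ [i]))}

lemma blkTree_eval {N : ℕ} {F : Set ((Set (Word k)) × (Word k → B))}
    {s : Word k → ({w : Word k // w.length ≤ N} → B)} (hs : s ∈ blkTree N F)
    (z : Word k) (hz : z.length ≤ N) (w : Word k) :
    s w ⟨z, hz⟩ = s (w ++ z) ⟨[], Nat.zero_le N⟩ := by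
  induction z generalizing w with
  | nil => rw [List.append_nil]
  | cons i z ih =>
    have h1 := (hs w i).2.2 z hz
    rw [← h1, ih _ (w ++ [i])]
    congr 1
    simp

end Aux

/-- The pattern recording a symbol and its children's symbols. -/
def pairPat (k d : ℕ) (a : Fin d) (b : Fin k → Fin d) : Word k → Fin d :=
  fun w => match w with
  | [j] => b j
  | _ => a

lemma markov_isSFT (k d : ℕ) (M : Fin k → Matrix (Fin d) (Fin d) Bool) :
    IsTreeSFT (markovTree k d M) := by
  classical
  refine ⟨(fun ab : Fin d × (Fin k → Fin d) =>
      (({w : Word k | w.length ≤ 1} : Set (Word k)), pairPat k d ab.1 ab.2)) ''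
      {ab | ∃ i, M i ab.1 (ab.2 i) = false}, ?_, ?_, ?_⟩
  · exact (Set.toFinite _).image _
  · rintro p ⟨ab, hab, rfl⟩
    refine ⟨List.finite_length_le _ _, ?_⟩
    intro w hw v hv
    exact le_trans hv.length_le hw
  · ext t
    constructor
    · rintro ht p ⟨ab, ⟨i, hab⟩, rfl⟩ ⟨s, hs⟩
      have h0 : t (s ++ []) = ab.1 := hs [] (by simp)
      have h1 : t (s ++ [i]) = ab.2 i := hs [i] (by simp)
      have hts := ht s i
      rw [show t s = ab.1 by simpa using h0, h1, hab] at hts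
      simp at hts
    · intro ht w i
      by_contra hbad
      have hM : M i (t w) (t (w ++ [i])) = false := by
        cases h : M i (t w) (t (w ++ [i])) with
        | false => rfl
        | true => exact absurd h hbad
      refine ht _ ⟨(t w, fun j => t (w ++ [j])), ⟨i, hM⟩, rfl⟩ ⟨w, ?_⟩
      intro v hv
      rcases v with _ | ⟨j, _ | ⟨j', z⟩⟩
      · show t (w ++ []) = t w
        rw [List.append_nil]
      · rfl
      · simp at hv

end TreeShiftPaper

namespace TreeShiftPaper

/-- A tree-shift `T` is sofic iff there exist a Markov tree-shift and a symbol map whose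
induced node-wise map sends the Markov tree-shift onto `T`. -/
theorem stmt2 {k : ℕ} (hk : 2 ≤ k) {A : Type*} [Fintype A] (T : Set (Word k → A))
    (hT : IsTreeShift T) :
    IsSoficTree T ↔
      ∃ (d : ℕ) (M : Fin k → Matrix (Fin d) (Fin d) Bool) (g : Fin d → A),
        (fun t : Word k → Fin d => g ∘ t) '' (markovTree k d M) = T := by
  classical
  constructor
  · rintro ⟨B, hBfin, T', n, g, ⟨F, hFfin, hFsupp, hT'⟩, hg, himg⟩
    haveI : Fintype B := hBfin
    have hU : (⋃ p ∈ F, p.1).Finite := hFfin.biUnion (fun p hp => (hFsupp p hp).1)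
    obtain ⟨N₀, hN₀⟩ := (hU.image List.length).bddAbove
    set N := max n N₀ with hNdef
    have hnN : n ≤ N := le_max_left _ _
    have hsupp : ∀ p ∈ F, ∀ w ∈ p.1, w.length ≤ N := fun p hp w hw =>
      le_trans (hN₀ ⟨w, Set.mem_biUnion hp hw, rfl⟩) (le_max_right _ _)
    haveI : Fintype {w : Word k // w.length ≤ N} := (List.finite_length_le (Fin k) N).fintype
    haveI : Fintype ({w : Word k // w.length ≤ N} → B) := Pi.instFintype
    set d := Fintype.card ({w : Word k // w.length ≤ N} → B) with hd
    set e : ({w : Word k // w.length ≤ N} → B) ≃ Fin d :=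
      Fintype.equivFin ({w : Word k // w.length ≤ N} → B) with he
    set M' : Fin k → Matrix (Fin d) (Fin d) Bool := fun i => Matrix.of fun a b =>
      if blkRel N F i (e.symm a) (e.symm b) then true else false with hM'def
    have hM' : ∀ (i : Fin k) (a b : Fin d),
        M' i a b = true ↔ blkRel N F i (e.symm a) (e.symm b) := by
      intro i a b
      simp only [hM'def, Matrix.of_apply]
      split <;> simp_all
    refine ⟨d, M', fun a => g (extBlk N (e.symm a)), ?_⟩
    rw [← himg]
    ext x
    constructor
    · rintro ⟨s', hs', rfl⟩
      have hs : (fun w => e.symm (s' w)) ∈ blkTree N F := fun w i => (hM' i _ _).1 (hs' w i)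
      have heval : ∀ (z : Word k) (hz : z.length ≤ N) (w : Word k),
          e.symm (s' w) ⟨z, hz⟩ = e.symm (s' (w ++ z)) ⟨[], Nat.zero_le N⟩ :=
        fun z hz w => blkTree_eval hs z hz w
      refine ⟨fun w => e.symm (s' w) ⟨[], Nat.zero_le N⟩, ?_, ?_⟩
      · rw [hT']
        rintro p hp ⟨s₀, hmatch⟩
        refine (hs s₀ ⟨0, by omega⟩).1 p hp ?_
        intro w hw
        have hwN := hsupp p hp w hw
        show extBlk N (e.symm (s' s₀)) w = p.2 w
        rw [extBlk, dif_pos hwN, heval w hwN s₀]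
        exact hmatch w hw
      · funext w
        show g _ = g (extBlk N (e.symm (s' w)))
        refine (hg _ _ ?_).symm
        intro z hz
        have hzN : z.length ≤ N := le_trans hz hnN
        rw [extBlk, dif_pos hzN, heval z hzN w]
    · rintro ⟨t, htT', rfl⟩
      rw [hT'] at htT'
      have hadm : ∀ w : Word k, AdmBlk N F (fun z => t (w ++ z.1)) := by
        intro w p hp hall
        refine htT' p hp ⟨w, fun w' hw' => ?_⟩
        have hl := hsupp p hp w' hw'
        have h2 := hall w' hw'
        rwa [extBlk, dif_pos hl] at h2
      have hs : (fun w => fun z : {w : Word k // w.length ≤ N} => t (w ++ z.1))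
          ∈ blkTree N F := by
        intro w i
        refine ⟨hadm w, hadm (w ++ [i]), ?_⟩
        intro z h
        show t ((w ++ [i]) ++ z) = t (w ++ (i :: z))
        rw [List.append_assoc]
        rfl
      refine ⟨fun w => e (fun z : {w : Word k // w.length ≤ N} => t (w ++ z.1)), ?_, ?_⟩
      · intro w i
        rw [hM', Equiv.symm_apply_apply, Equiv.symm_apply_apply]
        exact hs w i
      · funext w
        show g (extBlk N (e.symm (e _))) = g (fun z => t (w ++ z))
        rw [Equiv.symm_apply_apply]
        refine hg _ _ ?_
        intro z hz
        rw [extBlk, dif_pos (le_trans hz hnN)]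
  · rintro ⟨d, M, g, himg⟩
    refine ⟨Fin d, inferInstance, markovTree k d M, 0, fun u => g (u []),
      markov_isSFT k d M, ?_, ?_⟩
    · intro u v h
      show g (u []) = g (v [])
      rw [h [] (le_refl 0)]
    · rw [← himg]
      have hfun : (fun t : Word k → Fin d => fun w : Word k => g (t (w ++ []))) =
          (fun t : Word k → Fin d => g ∘ t) := by
        funext t w
        show g (t (w ++ [])) = g (t w)
        rw [List.append_nil]
      exact congrArg (fun f : (Word k → Fin d) → (Word k → A) => f '' markovTree k d M) hfun

end TreeShiftPaper
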